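/- Let t : Fin n → k and let D : A → A be a k-linear map satisfying the graded Leibniz rule with D(x_i) = x_i * w_t for all i ∈ Fin n. Then for every d : ℕ and every f ∈ A homogeneous of degree d: if d is odd then D f = f * w_t, and if d is even then D f = 0. -/

import Mathlib

open MvPolynomial

/-- For the DG polynomial algebra `A(t)` (so `D (X i) = X i * w_t` with
`w_t = ∑ j, t j • X j`), every homogeneous `f` of odd degree satisfies `D f = f * w_t`, and
every homogeneous `f` of even degree satisfies `D f = 0`. -/
theorem stmt_11 (k : Type*) [Field k] [CharZero k] (n : ℕ) (t : Fin n → k)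
    (D : MvPolynomial (Fin n) k →ₗ[k] MvPolynomial (Fin n) k)
    (hLeib : ∀ (d : ℕ) (a b : MvPolynomial (Fin n) k), a.IsHomogeneous d →
      D (a * b) = D a * b + ((-1 : k) ^ d) • (a * D b))
    (hD : ∀ i : Fin n, D (X i) = X i * ∑ j : Fin n, t j • X j) :
    ∀ (d : ℕ) (f : MvPolynomial (Fin n) k), f.IsHomogeneous d →
      (Odd d → D f = f * ∑ j : Fin n, t j • X j) ∧ (Even d → D f = 0) := by
  set w : MvPolynomial (Fin n) k := ∑ j : Fin n, t j • X j with hw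
  have h1 : D 1 = 0 := by
    have := hLeib 0 1 1 (isHomogeneous_one _ _)
    simpa using this
  -- key lemma on monomials
  have key : ∀ (d : ℕ) (s : Fin n →₀ ℕ) (c : k), s.degree = d →
      (Odd d → D (monomial s c) = monomial s c * w) ∧
      (Even d → D (monomial s c) = 0) := by
    intro d
    induction d with
    | zero =>
      intro s c hs
      rw [Finsupp.degree_eq_zero_iff] at hs
      subst hs
      have : (monomial (0 : Fin n →₀ ℕ) c : MvPolynomial (Fin n) k) = c • 1 := by
        simp [monomial_zero', C_eq_smul_one]
      rw [this, map_smul, h1, smul_zero]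
      exact ⟨fun h => by simp at h, fun _ => rfl⟩
    | succ d ih =>
      intro s c hs
      -- find i with s i ≠ 0
      have hne : s ≠ 0 := by
        intro h; rw [h, map_zero] at hs; exact Nat.succ_ne_zero d hs.symm
      obtain ⟨i, hi⟩ : ∃ i, s i ≠ 0 := by
        by_contra h; push_neg at h
        exact hne (Finsupp.ext fun i => h i)
      set s' : Fin n →₀ ℕ := s - Finsupp.single i 1 with hs'
      have hsum : Finsupp.single i 1 + s' = s := by
        ext j
        by_cases hj : j = i
        · subst hj
          simp [hs', Nat.add_sub_cancel' (Nat.one_le_iff_ne_zero.2 hi)]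
        · simp [hs', Finsupp.single_apply, Ne.symm hj, hj]
      have hdeg : s'.degree = d := by
        have h2 : (Finsupp.single i 1 + s').degree = d + 1 := by rw [hsum]; exact hs
        have h3 : (Finsupp.single i 1).degree = 1 := by
          simp [Finsupp.degree_apply, Finsupp.support_single_ne_zero i one_ne_zero]
        simp only [Finsupp.degree_eq_weight_one, map_add] at h2 h3 ⊢
        omega
      have hmono : (monomial s c : MvPolynomial (Fin n) k) = X i * monomial s' c := by
        rw [← hsum, monomial_single_add, pow_one]
      obtain ⟨hodd, heven⟩ := ih s' c hdeg
      have hle := hLeib 1 (X i) (monomial s' c) (isHomogeneous_X _ _)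
      rw [hD i, pow_one, neg_smul, one_smul] at hle
      constructor
      · intro hodd1
        have hevend : Even d := Nat.Odd.sub_odd hodd1 odd_one
        rw [hmono, hle, heven hevend]
        ring
      · intro heven1
        have hoddd : Odd d := Nat.not_even_iff_odd.mp (Nat.even_add_one.mp heven1)
        rw [hmono, hle, hodd hoddd]
        ring
  intro d f hf
  have hrepr : f = ∑ v ∈ f.support, monomial v (coeff v f) := (as_sum f)
  constructor
  · intro hodd
    calc D f = ∑ v ∈ f.support, D (monomial v (coeff v f)) := by
          rw [hrepr, map_sum]; rw [← hrepr]
      _ = ∑ v ∈ f.support, monomial v (coeff v f) * w := by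
          refine Finset.sum_congr rfl fun v hv => ?_
          have hdv : v.degree = d := by
            rw [Finsupp.degree_eq_weight_one]; exact hf (mem_support_iff.mp hv)
          exact (key d v _ hdv).1 hodd
      _ = f * w := by rw [← Finset.sum_mul, ← hrepr]
  · intro heven
    calc D f = ∑ v ∈ f.support, D (monomial v (coeff v f)) := by
          rw [hrepr, map_sum]; rw [← hrepr]
      _ = 0 := Finset.sum_eq_zero fun v hv =>
          (key d v _ (by rw [Finsupp.degree_eq_weight_one]; exact hf (mem_support_iff.mp hv))).2 heven
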